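/- arXiv:0806.1946 — 3 statements merged into one kernel-verified Lean document; each statement's English description precedes it below -/
import Mathlib

section
/- Let ψ : ℝ^m → ℝ^m be a C^∞ map with ψ(0) = 0, and let L = Dψ_0 be its derivative at the origin. Then the map S : ℝ × ℝ^m → ℝ^m defined by S(t,x) = t⁻¹ • ψ(t • x) for t ≠ 0 and S(0,x) = L(x) is C^∞ on ℝ × ℝ^m. -/
open MeasureTheory Set

set_option synthInstance.maxHeartbeats 1000000 in
/-- A parametric interval integral of a jointly smooth function is `C^n` for every `n`. -/
lemma contDiff_parametric_intervalIntegral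
    {E : Type} [NormedAddCommGroup E] [NormedSpace ℝ E] [FiniteDimensional ℝ E] (n : ℕ) :
    ∀ {F : Type} [NormedAddCommGroup F] [NormedSpace ℝ F] [CompleteSpace F]
      (f : E → ℝ → F), ContDiff ℝ (⊤ : ℕ∞) (Function.uncurry f) →
      ContDiff ℝ (n : WithTop ℕ∞) (fun x => ∫ s in (0:ℝ)..1, f x s) := by
  induction n with
  | zero =>
    intro F _ _ _ f hf
    rw [show ((0:ℕ) : WithTop ℕ∞) = 0 by norm_cast, contDiff_zero]
    exact intervalIntegral.continuous_parametric_intervalIntegral_of_continuous'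
      hf.continuous 0 1
  | succ n ih =>
    intro F _ _ _ f hf
    -- the partial derivative in the parameter direction
    set g : E → ℝ → (E →L[ℝ] F) := fun x s =>
      (fderiv ℝ (Function.uncurry f) (x, s)).comp (ContinuousLinearMap.inl ℝ E ℝ) with hg
    have hfd : ContDiff ℝ (((⊤:ℕ∞)) : WithTop ℕ∞) (fderiv ℝ (Function.uncurry f)) :=
      (contDiff_infty_iff_fderiv.1 hf).2
    have hgsmooth : ContDiff ℝ (⊤ : ℕ∞) (Function.uncurry g) := by
      have : Function.uncurry g = fun p : E × ℝ =>
          (fderiv ℝ (Function.uncurry f) p).comp (ContinuousLinearMap.inl ℝ E ℝ) := rfl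
      rw [this]
      exact ContDiff.clm_comp hfd contDiff_const
    -- pointwise differentiation under the integral sign
    have hdiff : ∀ x t, HasFDerivAt (fun y => f y t) (g x t) x := by
      intro x t
      have h1 : HasFDerivAt (Function.uncurry f)
          (fderiv ℝ (Function.uncurry f) (x, t)) (x, t) :=
        ((hf.differentiable (by simp)) (x, t)).hasFDerivAt
      exact h1.comp x (hasFDerivAt_prodMk_left (𝕜 := ℝ) x t)
    have key : ∀ x₀ : E, HasFDerivAt (fun x => ∫ s in (0:ℝ)..1, f x s)
        (∫ s in (0:ℝ)..1, g x₀ s) x₀ := by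
      intro x₀
      obtain ⟨C, hC⟩ : ∃ C, ∀ p ∈ (Metric.closedBall x₀ 1) ×ˢ (Icc (0:ℝ) 1),
          ‖Function.uncurry g p‖ ≤ C :=
        ((isCompact_closedBall x₀ 1).prod isCompact_Icc).exists_bound_of_continuousOn
          hgsmooth.continuous.continuousOn
      refine intervalIntegral.hasFDerivAt_integral_of_dominated_of_fderiv_le
        (F := f) (F' := g) (bound := fun _ => C) (μ := volume) (Metric.ball_mem_nhds x₀ one_pos) ?_ ?_ ?_ ?_ ?_ ?_
      · filter_upwards with x
        exact (hf.continuous.comp (Continuous.prodMk_right x)).aestronglyMeasurable.restrict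
      · exact (hf.continuous.comp (Continuous.prodMk_right x₀)).intervalIntegrable 0 1
      · exact (hgsmooth.continuous.comp (Continuous.prodMk_right x₀)).aestronglyMeasurable.restrict
      · filter_upwards with t ht x hx
        refine hC (x, t) ⟨Metric.ball_subset_closedBall hx, ?_⟩
        rw [uIoc_of_le (by norm_num : (0:ℝ) ≤ 1)] at ht
        exact ⟨ht.1.le, ht.2⟩
      · exact intervalIntegrable_const
      · filter_upwards with t ht x hx
        exact hdiff x t
    have hDiff : Differentiable ℝ (fun x => ∫ s in (0:ℝ)..1, f x s) :=
      fun x => (key x).differentiableAt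
    have hfderiv : (fderiv ℝ (fun x => ∫ s in (0:ℝ)..1, f x s))
        = fun x => ∫ s in (0:ℝ)..1, g x s := funext fun x => (key x).fderiv
    rw [show ((n + 1 : ℕ) : WithTop ℕ∞) = (n : WithTop ℕ∞) + 1 by norm_cast,
      contDiff_succ_iff_fderiv]
    refine ⟨hDiff, ?_, ?_⟩
    · intro h; exact absurd h (by simp)
    · rw [hfderiv]
      exact ih g hgsmooth

/-- Smoothness of Alexander's trick: for a `C^∞` map `ψ` with `ψ 0 = 0`, the deformation
`S(t,x) = t⁻¹ • ψ (t • x)` for `t ≠ 0`, extended at `t = 0` by the linear part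
`Dψ₀` of `ψ`, is jointly `C^∞` on `ℝ × ℝ^m`. -/
theorem stmt2 (m : ℕ) (ψ : (Fin m → ℝ) → (Fin m → ℝ))
    (hψ : ContDiff ℝ (⊤ : ℕ∞) ψ) (hψ0 : ψ 0 = 0) :
    ContDiff ℝ (⊤ : ℕ∞) (fun p : ℝ × (Fin m → ℝ) =>
      if p.1 = 0 then fderiv ℝ ψ 0 p.2 else p.1⁻¹ • ψ (p.1 • p.2)) := by
  have hψd : ContDiff ℝ (((⊤:ℕ∞)) : WithTop ℕ∞) (fderiv ℝ ψ) := (contDiff_infty_iff_fderiv.1 hψ).2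
  -- the Hadamard integrand
  set h : (ℝ × (Fin m → ℝ)) → ℝ → (Fin m → ℝ) :=
    fun p s => fderiv ℝ ψ (s • p.1 • p.2) p.2 with hh
  have hsmooth : ContDiff ℝ (⊤ : ℕ∞) (Function.uncurry h) := by
    have inner : ContDiff ℝ (((⊤:ℕ∞)) : WithTop ℕ∞)
        (fun q : (ℝ × (Fin m → ℝ)) × ℝ => q.2 • q.1.1 • q.1.2) :=
      contDiff_snd.smul (contDiff_fst.fst.smul contDiff_fst.snd)
    exact ContDiff.clm_apply (hψd.comp inner) contDiff_fst.snd
  -- the fundamental theorem of calculus / Hadamard's lemma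
  have FTC : ∀ y : Fin m → ℝ, ψ y = ∫ s in (0:ℝ)..1, fderiv ℝ ψ (s • y) y := by
    intro y
    have hcont : Continuous fun s : ℝ => fderiv ℝ ψ (s • y) y := by
      have : ContDiff ℝ (((⊤:ℕ∞)) : WithTop ℕ∞) fun s : ℝ => fderiv ℝ ψ (s • y) y :=
        ContDiff.clm_apply (hψd.comp (contDiff_id.smul contDiff_const)) contDiff_const
      exact this.continuous
    have hderiv : ∀ s ∈ uIcc (0:ℝ) 1,
        HasDerivAt (fun s : ℝ => ψ (s • y)) (fderiv ℝ ψ (s • y) y) s := by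
      intro s _
      have h1 : HasFDerivAt ψ (fderiv ℝ ψ (s • y)) (s • y) :=
        ((hψ.differentiable (by simp)) (s • y)).hasFDerivAt
      have h2 : HasDerivAt (fun s : ℝ => s • y) y s := by
        simpa using (hasDerivAt_id s).smul_const y
      exact h1.comp_hasDerivAt s h2
    have := intervalIntegral.integral_eq_sub_of_hasDerivAt hderiv
      (hcont.intervalIntegrable 0 1)
    rw [this, one_smul, zero_smul, hψ0, sub_zero]
  -- the deformation equals the parametric integral
  have hEq : (fun p : ℝ × (Fin m → ℝ) =>
      if p.1 = 0 then fderiv ℝ ψ 0 p.2 else p.1⁻¹ • ψ (p.1 • p.2))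
      = fun p => ∫ s in (0:ℝ)..1, h p s := by
    funext p
    obtain ⟨t, x⟩ := p
    by_cases ht : t = 0
    · simp only [ht, if_pos rfl]
      have : (fun s : ℝ => h (0, x) s) = fun _ : ℝ => fderiv ℝ ψ 0 x := by
        funext s; simp [hh]
      simp only [this]
      rw [intervalIntegral.integral_const]
      norm_num
    · simp only [if_neg ht]
      rw [FTC (t • x)]
      have : (fun s : ℝ => fderiv ℝ ψ (s • t • x) (t • x))
          = fun s : ℝ => t • h (t, x) s := by
        funext s
        simp only [hh]
        rw [← (fderiv ℝ ψ (s • t • x)).map_smul]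
      rw [this, intervalIntegral.integral_smul, smul_smul, inv_mul_cancel₀ ht, one_smul]
  rw [hEq, contDiff_infty]
  intro n
  exact contDiff_parametric_intervalIntegral n h hsmooth
end

section
/- Let k be a positive integer and let h : ℝ^m → ℝ be continuous and satisfy h(t•x) = t^k · h(x) for all t > 0 and x ∈ ℝ^m. Let ψ : ℝ^m → ℝ^m satisfy ψ(0) = 0, let ψ be differentiable at 0, and assume h ∘ ψ = h. Then h ∘ Dψ_0 = h, i.e. h((Dψ_0)(x)) = h(x) for every x ∈ ℝ^m. -/
/-- If `h` is continuous and positively homogeneous of degree `k`, and `ψ` fixes `0`,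
is differentiable at `0` and preserves `h`, then the linear part `Dψ₀` of `ψ`
also preserves `h`. -/
theorem stmt3 (m : ℕ) (k : ℕ) (hk : 0 < k)
    (h : (Fin m → ℝ) → ℝ) (hcont : Continuous h)
    (hhom : ∀ t : ℝ, 0 < t → ∀ x : Fin m → ℝ, h (t • x) = t ^ k * h x)
    (ψ : (Fin m → ℝ) → (Fin m → ℝ)) (hψ0 : ψ 0 = 0)
    (hdiff : DifferentiableAt ℝ ψ 0) (hψ : h ∘ ψ = h) :
    ∀ x : Fin m → ℝ, h (fderiv ℝ ψ 0 x) = h x := by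
  intro x
  set D := fderiv ℝ ψ 0 x with hD
  -- the curve t ↦ ψ (t • x) has derivative D at 0
  have hcurve : HasDerivAt (fun t : ℝ => ψ (t • x)) D 0 := by
    have h1 : HasDerivAt (fun t : ℝ => t • x) x 0 := by
      simpa using (hasDerivAt_id (0 : ℝ)).smul_const x
    have h2 : HasFDerivAt ψ (fderiv ℝ ψ 0) ((0:ℝ) • x) := by simpa using hdiff.hasFDerivAt
    have := h2.comp_hasDerivAt (x := (0 : ℝ)) (by simpa using h1)
    exact this
  -- slope convergence: t⁻¹ • ψ (t • x) → D along 𝓝[>] 0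
  have hslope : Filter.Tendsto (fun t : ℝ => t⁻¹ • ψ (t • x))
      (nhdsWithin 0 (Set.Ioi 0)) (nhds D) := by
    have := (hasDerivAt_iff_tendsto_slope.mp hcurve).mono_left
      (nhdsWithin_mono 0 (by intro t ht; exact ne_of_gt ht))
    refine this.congr' ?_
    filter_upwards [self_mem_nhdsWithin] with t ht
    simp [slope, hψ0, (show (0:ℝ) < t from ht).ne']
  have hlim : Filter.Tendsto (fun t : ℝ => h (t⁻¹ • ψ (t • x)))
      (nhdsWithin 0 (Set.Ioi 0)) (nhds (h D)) :=
    (hcont.tendsto D).comp hslope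
  -- but that function is eventually constant equal to h x
  have heq : ∀ t : ℝ, 0 < t → h (t⁻¹ • ψ (t • x)) = h x := by
    intro t ht
    have h1 := hhom t ht (t⁻¹ • ψ (t • x))
    rw [smul_smul, mul_inv_cancel₀ ht.ne', one_smul] at h1
    have h2 : h (ψ (t • x)) = t ^ k * h x := by
      have := congrFun hψ (t • x)
      simp only [Function.comp_apply] at this
      rw [this, hhom t ht x]
    have h3 : t ^ k * h (t⁻¹ • ψ (t • x)) = t ^ k * h x := by
      rw [← h1, h2]
    exact mul_left_cancel₀ (pow_ne_zero _ ht.ne') h3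
  have hconst : Filter.Tendsto (fun t : ℝ => h (t⁻¹ • ψ (t • x)))
      (nhdsWithin 0 (Set.Ioi 0)) (nhds (h x)) := by
    refine Filter.Tendsto.congr' ?_ tendsto_const_nhds
    filter_upwards [self_mem_nhdsWithin] with t ht
    exact (heq t ht).symm
  exact tendsto_nhds_unique hlim hconst
end

section
/- Fix k ∈ ℤ and define S : ℝ⁴ → ℝ⁴ in coordinates (x₁, x₂, ξ₁, ξ₂) by S(x₁,x₂,ξ₁,ξ₂) = (x₁', x₂, ξ₁', ξ₂ + k q₁), where x₁' = x₁cos(k x₂) − ξ₁ sin(k x₂), ξ₁' = x₁ sin(k x₂) + ξ₁ cos(k x₂) (i.e. x₁' + iξ₁' = e^{i k x₂}(x₁ + iξ₁)) and q₁ = (x₁² + ξ₁²)/2. Then: (i) S is a bijection of ℝ⁴; (ii) S is differentiable and its derivative preserves the standard symplectic form ω at every point, where ω(u,v) = u_{ξ₁} v_{x₁} − u_{x₁} v_{ξ₁} + u_{ξ₂} v_{x₂} − u_{x₂} v_{ξ₂}; (iii) q₁ ∘ S = q₁, so (q₁, ξ₂) ∘ S = (q₁, ξ₂ + k q₁). 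-/
open Real

/-- The map `S(x₁,x₂,ξ₁,ξ₂) = (x₁', x₂, ξ₁', ξ₂ + k q₁)` with
`x₁' + iξ₁' = e^{ikx₂}(x₁ + iξ₁)` and `q₁ = (x₁² + ξ₁²)/2` is a bijective, differentiable
map of `ℝ⁴` whose derivative preserves the standard symplectic form at every point, and
which intertwines the momentum map `(q₁, ξ₂)` with `(q₁, ξ₂ + k q₁)`.
Here a point of `ℝ⁴` is written `p = (x₁, x₂, ξ₁, ξ₂)` as a nested product, and
`ω u v = u_{ξ₁} v_{x₁} − u_{x₁} v_{ξ₁} + u_{ξ₂} v_{x₂} − u_{x₂} v_{ξ₂}`. -/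
theorem stmt5 (k : ℤ)
    (S : ℝ × ℝ × ℝ × ℝ → ℝ × ℝ × ℝ × ℝ)
    (hS : ∀ p : ℝ × ℝ × ℝ × ℝ,
      S p = (p.1 * Real.cos ((k : ℝ) * p.2.1) - p.2.2.1 * Real.sin ((k : ℝ) * p.2.1),
             p.2.1,
             p.1 * Real.sin ((k : ℝ) * p.2.1) + p.2.2.1 * Real.cos ((k : ℝ) * p.2.1),
             p.2.2.2 + (k : ℝ) * ((p.1 ^ 2 + p.2.2.1 ^ 2) / 2)))
    (ω : ℝ × ℝ × ℝ × ℝ → ℝ × ℝ × ℝ × ℝ → ℝ)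
    (hω : ∀ u v : ℝ × ℝ × ℝ × ℝ,
      ω u v = u.2.2.1 * v.1 - u.1 * v.2.2.1 + u.2.2.2 * v.2.1 - u.2.1 * v.2.2.2)
    (q₁ : ℝ × ℝ × ℝ × ℝ → ℝ) (hq₁ : ∀ p, q₁ p = (p.1 ^ 2 + p.2.2.1 ^ 2) / 2) :
    Function.Bijective S ∧
    Differentiable ℝ S ∧
    (∀ p u v, ω (fderiv ℝ S p u) (fderiv ℝ S p v) = ω u v) ∧
    (∀ p, q₁ (S p) = q₁ p) ∧
    (∀ p, (S p).2.2.2 = p.2.2.2 + (k : ℝ) * q₁ p) := by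
  have hS' : S = fun p : ℝ × ℝ × ℝ × ℝ =>
      ((p.1 * Real.cos ((k : ℝ) * p.2.1) - p.2.2.1 * Real.sin ((k : ℝ) * p.2.1),
        p.2.1,
        p.1 * Real.sin ((k : ℝ) * p.2.1) + p.2.2.1 * Real.cos ((k : ℝ) * p.2.1),
        p.2.2.2 + (k : ℝ) * ((p.1 ^ 2 + p.2.2.1 ^ 2) / 2)) : ℝ × ℝ × ℝ × ℝ) :=
    funext hS
  have key : ∀ p : ℝ × ℝ × ℝ × ℝ, ∃ D : (ℝ × ℝ × ℝ × ℝ) →L[ℝ] ℝ × ℝ × ℝ × ℝ,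
      HasFDerivAt S D p ∧ ∀ w : ℝ × ℝ × ℝ × ℝ, D w =
        (Real.cos ((k : ℝ) * p.2.1) * w.1 - Real.sin ((k : ℝ) * p.2.1) * w.2.2.1
            - (k : ℝ) * (p.1 * Real.sin ((k : ℝ) * p.2.1) + p.2.2.1 * Real.cos ((k : ℝ) * p.2.1)) * w.2.1,
         w.2.1,
         Real.sin ((k : ℝ) * p.2.1) * w.1 + Real.cos ((k : ℝ) * p.2.1) * w.2.2.1
            + (k : ℝ) * (p.1 * Real.cos ((k : ℝ) * p.2.1) - p.2.2.1 * Real.sin ((k : ℝ) * p.2.1)) * w.2.1,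
         w.2.2.2 + (k : ℝ) * (p.1 * w.1 + p.2.2.1 * w.2.2.1)) := by
    intro p
    have h1 : HasFDerivAt (fun q : ℝ × ℝ × ℝ × ℝ => q.1)
        (ContinuousLinearMap.fst ℝ ℝ (ℝ × ℝ × ℝ)) p := hasFDerivAt_fst
    have h2 : HasFDerivAt (fun q : ℝ × ℝ × ℝ × ℝ => q.2.1)
        ((ContinuousLinearMap.fst ℝ ℝ (ℝ × ℝ)).comp (ContinuousLinearMap.snd ℝ ℝ (ℝ × ℝ × ℝ))) p :=
      hasFDerivAt_fst.comp p hasFDerivAt_snd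
    have h3 : HasFDerivAt (fun q : ℝ × ℝ × ℝ × ℝ => q.2.2.1)
        ((ContinuousLinearMap.fst ℝ ℝ ℝ).comp ((ContinuousLinearMap.snd ℝ ℝ (ℝ × ℝ)).comp
          (ContinuousLinearMap.snd ℝ ℝ (ℝ × ℝ × ℝ)))) p :=
      hasFDerivAt_fst.comp p (hasFDerivAt_snd.comp p hasFDerivAt_snd)
    have h4 : HasFDerivAt (fun q : ℝ × ℝ × ℝ × ℝ => q.2.2.2)
        ((ContinuousLinearMap.snd ℝ ℝ ℝ).comp ((ContinuousLinearMap.snd ℝ ℝ (ℝ × ℝ)).comp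
          (ContinuousLinearMap.snd ℝ ℝ (ℝ × ℝ × ℝ)))) p :=
      hasFDerivAt_snd.comp p (hasFDerivAt_snd.comp p hasFDerivAt_snd)
    have hθ : HasFDerivAt (fun q : ℝ × ℝ × ℝ × ℝ => (k : ℝ) * q.2.1)
        ((k : ℝ) • ((ContinuousLinearMap.fst ℝ ℝ (ℝ × ℝ)).comp
          (ContinuousLinearMap.snd ℝ ℝ (ℝ × ℝ × ℝ)))) p := h2.const_mul _
    have hgood : HasFDerivAt (fun q : ℝ × ℝ × ℝ × ℝ =>
        ((q.1 * Real.cos ((k : ℝ) * q.2.1) - q.2.2.1 * Real.sin ((k : ℝ) * q.2.1),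
          q.2.1,
          q.1 * Real.sin ((k : ℝ) * q.2.1) + q.2.2.1 * Real.cos ((k : ℝ) * q.2.1),
          q.2.2.2 + (k : ℝ) * ((2:ℝ)⁻¹ * (q.1 * q.1 + q.2.2.1 * q.2.2.1))) : ℝ × ℝ × ℝ × ℝ)) _ p :=
      HasFDerivAt.prodMk (HasFDerivAt.sub (h1.mul hθ.cos) (h3.mul hθ.sin)) (HasFDerivAt.prodMk h2
        (HasFDerivAt.prodMk (HasFDerivAt.add (h1.mul hθ.sin) (h3.mul hθ.cos))
          (h4.add (HasFDerivAt.const_mul (HasFDerivAt.const_mul (HasFDerivAt.add (h1.mul h1) (h3.mul h3)) (2:ℝ)⁻¹) (k : ℝ)))))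
    have heq : (fun p : ℝ × ℝ × ℝ × ℝ =>
        ((p.1 * Real.cos ((k : ℝ) * p.2.1) - p.2.2.1 * Real.sin ((k : ℝ) * p.2.1),
          p.2.1,
          p.1 * Real.sin ((k : ℝ) * p.2.1) + p.2.2.1 * Real.cos ((k : ℝ) * p.2.1),
          p.2.2.2 + (k : ℝ) * ((p.1 ^ 2 + p.2.2.1 ^ 2) / 2)) : ℝ × ℝ × ℝ × ℝ)) =ᶠ[nhds p]
        (fun q : ℝ × ℝ × ℝ × ℝ =>
        ((q.1 * Real.cos ((k : ℝ) * q.2.1) - q.2.2.1 * Real.sin ((k : ℝ) * q.2.1),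
          q.2.1,
          q.1 * Real.sin ((k : ℝ) * q.2.1) + q.2.2.1 * Real.cos ((k : ℝ) * q.2.1),
          q.2.2.2 + (k : ℝ) * ((2:ℝ)⁻¹ * (q.1 * q.1 + q.2.2.1 * q.2.2.1))) : ℝ × ℝ × ℝ × ℝ)) :=
      Filter.Eventually.of_forall fun q => by
        simp only [Prod.mk.injEq]
        refine ⟨?_, ?_, ?_, ?_⟩ <;> first | trivial | ring
    have hDS := hgood.congr_of_eventuallyEq heq
    rw [← hS'] at hDS
    refine ⟨_, hDS, ?_⟩
    intro w
    ·
      simp only [ContinuousLinearMap.prod_apply, ContinuousLinearMap.add_apply,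
        ContinuousLinearMap.sub_apply, ContinuousLinearMap.smul_apply,
        ContinuousLinearMap.comp_apply, ContinuousLinearMap.coe_fst',
        ContinuousLinearMap.coe_snd', smul_eq_mul, pow_one, Nat.cast_ofNat,
        Prod.mk.injEq]
      refine ⟨?_, ?_, ?_, ?_⟩ <;> first | trivial | ring
  refine ⟨?_, fun p => (key p).choose_spec.1.differentiableAt, ?_, ?_, ?_⟩
  · refine Function.bijective_iff_has_inverse.2
      ⟨fun p : ℝ × ℝ × ℝ × ℝ =>
        (p.1 * Real.cos ((k : ℝ) * p.2.1) + p.2.2.1 * Real.sin ((k : ℝ) * p.2.1),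
         p.2.1,
         -p.1 * Real.sin ((k : ℝ) * p.2.1) + p.2.2.1 * Real.cos ((k : ℝ) * p.2.1),
         p.2.2.2 - (k : ℝ) * ((p.1 ^ 2 + p.2.2.1 ^ 2) / 2)), ?_, ?_⟩
    · intro p
      rw [hS p]
      have h := Real.sin_sq_add_cos_sq ((k : ℝ) * p.2.1)
      refine Prod.ext ?_ (Prod.ext rfl (Prod.ext ?_ ?_)) <;> simp only
      · linear_combination p.1 * h
      · linear_combination p.2.2.1 * h
      · linear_combination (-(k : ℝ) / 2 * (p.1 ^ 2 + p.2.2.1 ^ 2)) * h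
    · intro p
      rw [hS]
      have h := Real.sin_sq_add_cos_sq ((k : ℝ) * p.2.1)
      refine Prod.ext ?_ (Prod.ext rfl (Prod.ext ?_ ?_)) <;> simp only
      · linear_combination p.1 * h
      · linear_combination p.2.2.1 * h
      · linear_combination ((k : ℝ) / 2 * (p.1 ^ 2 + p.2.2.1 ^ 2)) * h
  · intro p u v
    obtain ⟨D, hD, hDw⟩ := key p
    rw [hD.fderiv, hω, hω]
    simp only [hDw]
    have h := Real.sin_sq_add_cos_sq ((k : ℝ) * p.2.1)
    linear_combination (u.2.2.1 * v.1 - u.1 * v.2.2.1 +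
      (k : ℝ) * (u.2.1 * (p.1 * v.1 + p.2.2.1 * v.2.2.1) -
        v.2.1 * (p.1 * u.1 + p.2.2.1 * u.2.2.1))) * h
  · intro p
    rw [hq₁, hq₁, hS p]
    have h := Real.sin_sq_add_cos_sq ((k : ℝ) * p.2.1)
    simp only
    linear_combination ((p.1 ^ 2 + p.2.2.1 ^ 2) / 2) * h
  · intro p
    rw [hS p, hq₁]
end
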